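/- Let V = (a, b) ∈ ℝ² be a row vector with a + b ≠ 0. Then the minimum over all orthogonal matrices G ∈ O(2) of ‖VG‖_∞ exists and equals √((a² + b²)/2); i.e., √((a² + b²)/2) is the least element of the set {‖VG‖_∞ : G ∈ O(2)}. -/

import Mathlib

open Matrix

/-- Let `V = (a, b) ∈ ℝ²` be a row vector with `a + b ≠ 0`. Then the minimum over all
orthogonal `G ∈ O(2)` of `‖VG‖_∞` exists and equals `√((a² + b²)/2)`: it is the least
element of the set `{‖VG‖_∞ : G ∈ O(2)}`. -/
theorem isLeast_sup_norm_vecMul_orthogonal (a b : ℝ) (hab : a + b ≠ 0) :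
    IsLeast
      {t : ℝ | ∃ G : Matrix (Fin 2) (Fin 2) ℝ, Gᵀ * G = 1 ∧
        t = max |(![a, b] ᵥ* G) 0| |(![a, b] ᵥ* G) 1|}
      (Real.sqrt ((a ^ 2 + b ^ 2) / 2)) := by
  have h1 : (0:ℝ) < (a+b)^2 := by positivity
  have h2 : 0 < a^2 + b^2 := by nlinarith [sq_nonneg (a-b)]
  set s := Real.sqrt ((a^2+b^2)/2) with hs
  have hs0 : 0 < s := Real.sqrt_pos.2 (by linarith)
  have hs2 : s^2 = (a^2+b^2)/2 := Real.sq_sqrt (by linarith)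
  have hsne : s ≠ 0 := ne_of_gt hs0
  constructor
  · refine ⟨![![(a-b)/(2*s), (a+b)/(2*s)], ![(a+b)/(2*s), (b-a)/(2*s)]], ?_, ?_⟩
    · ext i j
      fin_cases i <;> fin_cases j <;>
        erw [Matrix.mul_apply] <;> simp [Matrix.transpose, Matrix.of_apply, Matrix.mul_apply, Matrix.transpose_apply, Fin.sum_univ_two,
          Matrix.one_apply] <;>
        field_simp <;> nlinarith [hs2]
    · have e0 : (![a,b] ᵥ* ![![(a-b)/(2*s), (a+b)/(2*s)], ![(a+b)/(2*s), (b-a)/(2*s)]]) 0 = s := by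
        simp [Matrix.vecMul, dotProduct, Fin.sum_univ_two]
        field_simp
        nlinarith [hs2]
      have e1 : (![a,b] ᵥ* ![![(a-b)/(2*s), (a+b)/(2*s)], ![(a+b)/(2*s), (b-a)/(2*s)]]) 1 = s := by
        simp [Matrix.vecMul, dotProduct, Fin.sum_univ_two]
        field_simp
        nlinarith [hs2]
      rw [e0, e1, abs_of_pos hs0, max_self]
  · rintro t ⟨G, hG, rfl⟩
    have hGG : G * Gᵀ = 1 := mul_eq_one_comm.mp hG
    have h00 := congrFun (congrFun hGG 0) 0
    have h01 := congrFun (congrFun hGG 0) 1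
    have h11 := congrFun (congrFun hGG 1) 1
    simp [Matrix.mul_apply, Fin.sum_univ_two, Matrix.one_apply] at h00 h01 h11
    set x0 := (![a,b] ᵥ* G) 0 with hx0
    set x1 := (![a,b] ᵥ* G) 1 with hx1
    have hx0e : x0 = a * G 0 0 + b * G 1 0 := by
      simp [hx0, Matrix.vecMul, dotProduct, Fin.sum_univ_two]
    have hx1e : x1 = a * G 0 1 + b * G 1 1 := by
      simp [hx1, Matrix.vecMul, dotProduct, Fin.sum_univ_two]
    have hsum : x0^2 + x1^2 = a^2 + b^2 := by
      rw [hx0e, hx1e]; linear_combination a^2*h00 + b^2*h11 + 2*a*b*h01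
    have a0 : x0^2 ≤ (max |x0| |x1|)^2 := by
      rw [← sq_abs x0]
      exact pow_le_pow_left₀ (abs_nonneg _) (le_max_left _ _) 2
    have a1 : x1^2 ≤ (max |x0| |x1|)^2 := by
      rw [← sq_abs x1]
      exact pow_le_pow_left₀ (abs_nonneg _) (le_max_right _ _) 2
    have hmax : (a^2+b^2)/2 ≤ (max |x0| |x1|)^2 := by linarith
    have := Real.sqrt_le_sqrt hmax
    rwa [Real.sqrt_sq (le_trans (abs_nonneg x0) (le_max_left _ _))] at this
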